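/- Let p ∈ (1,2], a ∈ [0,1], and m ∈ ℕ, and define Φ(r) = (1 + r^m)²·(r^m + a)^{p−1}/(1 + a·r^m)^{p+1} for r ∈ [0,1). Then Φ(r^{1/m}) ≥ a^{p−1} for all r ∈ [0,1); equivalently, (1 + r)²·(r + a)^{p−1} ≥ a^{p−1}·(1 + ar)^{p+1} for all r ∈ [0,1). -/
import Mathlib

lemma stmt_19_core (p : ℝ) (hp1 : 1 < p) (a : ℝ) (ha : a ∈ Set.Icc (0:ℝ) 1)
    (r : ℝ) (hr : r ∈ Set.Ico (0:ℝ) 1) :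
    a ^ (p - 1) * (1 + a * r) ^ (p + 1) ≤ (1 + r) ^ 2 * (r + a) ^ (p - 1) := by
  obtain ⟨ha0, ha1⟩ := ha
  obtain ⟨hr0, hr1⟩ := hr
  have har : 0 ≤ a * r := mul_nonneg ha0 hr0
  have h1 : (0:ℝ) < 1 + a * r := by linarith
  have hsplit : (1 + a * r) ^ (p + 1)
      = (1 + a * r) ^ (p - 1) * (1 + a * r) ^ 2 := by
    rw [← Real.rpow_natCast (1 + a * r) 2, ← Real.rpow_add h1]
    norm_num
    rw [show p + 1 = p - 1 + 2 by ring]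
  have hmul : a ^ (p - 1) * (1 + a * r) ^ (p - 1) = (a * (1 + a * r)) ^ (p - 1) :=
    (Real.mul_rpow ha0 h1.le).symm
  calc a ^ (p - 1) * (1 + a * r) ^ (p + 1)
      = (a * (1 + a * r)) ^ (p - 1) * (1 + a * r) ^ 2 := by
        rw [hsplit, ← mul_assoc, hmul]
    _ ≤ (r + a) ^ (p - 1) * (1 + r) ^ 2 := by
        apply mul_le_mul
        · apply Real.rpow_le_rpow (mul_nonneg ha0 h1.le) _ (by linarith)
          nlinarith [mul_nonneg (mul_nonneg ha0 hr0) (sub_nonneg.2 ha1)]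
        · apply pow_le_pow_left₀ h1.le
          nlinarith
        · positivity
        · positivity
    _ = (1 + r) ^ 2 * (r + a) ^ (p - 1) := mul_comm _ _

/-- inequality from the proof of Lemma 3, after `[LP2021, Lemma 3.1]`.
For `p ∈ (1,2]`, `a ∈ [0,1]`, `m ≥ 1` and
`Φ(r) = (1 + r^m)²(r^m + a)^{p−1}/(1 + a r^m)^{p+1}`, one has `Φ(r^{1/m}) ≥ a^{p−1}`
for all `r ∈ [0,1)`; equivalently
`(1 + r)²(r + a)^{p−1} ≥ a^{p−1}(1 + ar)^{p+1}` for all `r ∈ [0,1)`. -/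
theorem stmt_19 (p : ℝ) (hp1 : 1 < p) (hp2 : p ≤ 2)
    (a : ℝ) (ha : a ∈ Set.Icc (0:ℝ) 1) (m : ℕ) (hm : 1 ≤ m) :
    (∀ r ∈ Set.Ico (0:ℝ) 1,
      a ^ (p - 1) ≤
        (1 + (r ^ ((1:ℝ) / m)) ^ m) ^ 2 * ((r ^ ((1:ℝ) / m)) ^ m + a) ^ (p - 1)
          / (1 + a * (r ^ ((1:ℝ) / m)) ^ m) ^ (p + 1)) ∧
    (∀ r ∈ Set.Ico (0:ℝ) 1,
      a ^ (p - 1) * (1 + a * r) ^ (p + 1) ≤ (1 + r) ^ 2 * (r + a) ^ (p - 1)) := by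
  constructor
  · intro r hr
    obtain ⟨hr0, hr1⟩ := hr
    have hroot : (r ^ ((1:ℝ) / m)) ^ m = r := by
      rw [← Real.rpow_natCast (r ^ ((1:ℝ) / m)) m, ← Real.rpow_mul hr0]
      have hmne : (m:ℝ) ≠ 0 := Nat.cast_ne_zero.2 (by omega)
      rw [one_div, inv_mul_cancel₀ hmne, Real.rpow_one]
    rw [hroot]
    have h1 : (0:ℝ) < 1 + a * r := by
      have := mul_nonneg ha.1 hr0; linarith
    rw [le_div_iff₀ (Real.rpow_pos_of_pos h1 _)]
    exact stmt_19_core p hp1 a ha r ⟨hr0, hr1⟩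
  · exact fun r hr => stmt_19_core p hp1 a ha r hr
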